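/- If L is a context-free language that is infinite, then L is not subword-free; consequently, every subword-free context-free language is finite. -/

import Mathlib

def SubwordFree {α : Type*} (L : Set (List α)) : Prop :=
  ∀ u ∈ L, ∀ w ∈ L, u.Sublist w → u = w

/-- The set of terminals occurring in outputs of rules of a grammar is finite. -/
lemma cfg_terminals_finite {T : Type*} (g : ContextFreeGrammar T) :
    Set.Finite {a : T | ∃ r ∈ g.rules, Symbol.terminal a ∈ r.output} := by
  have : {a : T | ∃ r ∈ g.rules, Symbol.terminal a ∈ r.output} ⊆
      ⋃ r ∈ (g.rules : Set (ContextFreeRule T g.NT)),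
        {a : T | Symbol.terminal a ∈ r.output} := by
    rintro a ⟨r, hr, hmem⟩
    exact Set.mem_biUnion hr hmem
  refine Set.Finite.subset ?_ this
  refine Set.Finite.biUnion g.rules.finite_toSet fun r _ => ?_
  have : {a : T | Symbol.terminal a ∈ r.output} =
      (Symbol.terminal : T → Symbol T g.NT) ⁻¹' {x | x ∈ r.output} := rfl
  rw [this]
  exact r.output.finite_toSet.preimage
    (fun a _ b _ h => by injection h)

lemma cfg_derives_terminals {T : Type*} (g : ContextFreeGrammar T)
    {v : List (Symbol T g.NT)}
    (h : g.Derives [Symbol.nonterminal g.initial] v) :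
    ∀ a : T, Symbol.terminal a ∈ v → ∃ r ∈ g.rules, Symbol.terminal a ∈ r.output := by
  induction h with
  | refl => intro a ha; simp at ha
  | tail _ hstep ih =>
    intro a ha
    obtain ⟨r, hr, hrw⟩ := hstep
    obtain ⟨p, q, rfl, rfl⟩ := hrw.exists_parts
    rw [List.mem_append, List.mem_append] at ha
    rcases ha with (hp | ho) | hq
    · exact ih a (by simp [hp])
    · exact ⟨r, hr, ho⟩
    · exact ih a (by simp [hq])

theorem subwordFree_contextFree_finite {α : Type*} (L : Language α)
    (hcf : L.IsContextFree) :
    (Set.Infinite (L : Set (List α)) → ¬ SubwordFree (L : Set (List α))) ∧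
    (SubwordFree (L : Set (List α)) → Set.Finite (L : Set (List α))) := by
  have key : Set.Infinite (L : Set (List α)) → ¬ SubwordFree (L : Set (List α)) := by
    intro hinf hsf
    obtain ⟨g, rfl⟩ := hcf
    set s : Set α := {a : α | ∃ r ∈ g.rules, Symbol.terminal a ∈ r.output} with hs
    have hsub : ∀ w ∈ (g.language : Set (List α)), ∀ x ∈ w, x ∈ s := by
      intro w hw x hx
      rw [ContextFreeGrammar.mem_language_iff] at hw
      exact cfg_derives_terminals g hw x (List.mem_map_of_mem (f := Symbol.terminal) hx)
    have hpwo : Set.PartiallyWellOrderedOn {l : List α | ∀ x ∈ l, x ∈ s}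
        (List.SublistForall₂ (· = ·)) :=
      Set.PartiallyWellOrderedOn.partiallyWellOrderedOn_sublistForall₂ _
        ((cfg_terminals_finite g).partiallyWellOrderedOn)
    let f := hinf.natEmbedding
    obtain ⟨m, n, hmn, hrel⟩ := hpwo.exists_lt (f := fun k => (f k : List α))
      (fun k => hsub _ (f k).2)
    -- SublistForall₂ Eq means Sublist
    rw [List.sublistForall₂_iff] at hrel
    obtain ⟨l, hfor, hsl⟩ := hrel
    rw [List.forall₂_eq_eq_eq] at hfor
    subst hfor
    have := hsf _ (f m).2 _ (f n).2 hsl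
    exact absurd (f.injective (Subtype.ext this)) hmn.ne
  exact ⟨key, fun hsf => Set.not_infinite.mp fun hinf => key hinf hsf⟩
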